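/- Let f : ℝ^d → ℝ be a bounded measurable function, σ > 0, and u(x) = E_{δ∼N(0,σ²I)}[f(x+δ)]. Then the Laplacian of u satisfies Δu(x) = E_{δ∼N(0,σ²I)}[((‖δ‖² − σ²d)/σ⁴) · f(x+δ)] for every x ∈ ℝ^d. -/

import Mathlib

open MeasureTheory Real

/-- The Gaussian probability measure `N(0, σ²I)` on `ℝ^d`, defined via its density
with respect to the Lebesgue measure. -/
noncomputable def gaussianMeasure (d : ℕ) (σ : ℝ) :
    Measure (EuclideanSpace ℝ (Fin d)) :=
  volume.withDensity fun δ =>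
    ENNReal.ofReal ((2 * π * σ ^ 2) ^ (-(d : ℝ) / 2) * Real.exp (-‖δ‖ ^ 2 / (2 * σ ^ 2)))

noncomputable section

namespace SteinAux

theorem integrable_rexp_gauss (d : ℕ) (b : ℝ) (hb : 0 < b) :
    Integrable (fun v : EuclideanSpace ℝ (Fin d) => rexp (-b * ‖v‖^2)) := by
  have := GaussianFourier.integrable_cexp_neg_mul_sq_norm_add (V := EuclideanSpace ℝ (Fin d))
    (b := (b:ℂ)) (by simpa using hb) 0 0
  simp only [zero_mul, add_zero] at this
  apply this.norm.congr
  filter_upwards with v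
  rw [Complex.norm_exp]
  norm_cast

variable {d : ℕ}

theorem norm_sq_eq (z : EuclideanSpace ℝ (Fin d)) : ‖z‖^2 = ∑ i, (z i)^2 := by
  rw [EuclideanSpace.norm_eq, sq_sqrt] <;> simp [sq_abs]
  positivity

theorem abs_coord_le (z : EuclideanSpace ℝ (Fin d)) (i : Fin d) : |z i| ≤ ‖z‖ := by
  have h1 : (z i)^2 ≤ ∑ j, (z j)^2 :=
    Finset.single_le_sum (f := fun j => (z j)^2) (fun j _ => sq_nonneg _) (Finset.mem_univ i)
  calc |z i| = Real.sqrt ((z i)^2) := (Real.sqrt_sq_eq_abs _).symm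
    _ ≤ Real.sqrt (∑ j, (z j)^2) := Real.sqrt_le_sqrt h1
    _ = ‖z‖ := by rw [← norm_sq_eq, Real.sqrt_sq (norm_nonneg z)]

def gconst (d : ℕ) (σ : ℝ) : ℝ := (2 * π * σ ^ 2) ^ (-(d : ℝ) / 2)

def g (d : ℕ) (σ : ℝ) (z : EuclideanSpace ℝ (Fin d)) : ℝ :=
  gconst d σ * rexp (-‖z‖ ^ 2 / (2 * σ ^ 2))

variable {σ : ℝ}

theorem gconst_pos (hσ : 0 < σ) : 0 < gconst d σ :=
  Real.rpow_pos_of_pos (by positivity) _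

theorem g_pos (hσ : 0 < σ) (z : EuclideanSpace ℝ (Fin d)) : 0 < g d σ z :=
  mul_pos (gconst_pos hσ) (Real.exp_pos _)

theorem continuous_g : Continuous (g d σ) :=
  continuous_const.mul (Real.continuous_exp.comp (((continuous_norm.pow 2).neg).div_const _))

def Dg (σ : ℝ) (z : EuclideanSpace ℝ (Fin d)) : EuclideanSpace ℝ (Fin d) →L[ℝ] ℝ :=
  (-(g d σ z) / σ ^ 2) • innerSL ℝ z

theorem continuous_Dg : Continuous (Dg (d := d) σ) :=
  ((continuous_g.neg).div_const _).smul (innerSL ℝ).continuous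

theorem hasFDerivAt_g (hσ : 0 < σ) (z : EuclideanSpace ℝ (Fin d)) :
    HasFDerivAt (g d σ) (Dg σ z) z := by
  have h1 : HasFDerivAt (fun z : EuclideanSpace ℝ (Fin d) => -(1/(2*σ^2)) * ‖z‖^2)
      ((-(1/(2*σ^2))) • (2 • innerSL ℝ z)) z :=
    ((hasStrictFDerivAt_norm_sq z).hasFDerivAt).const_mul _
  have h2 := (h1.exp).const_mul (gconst d σ)
  have hfun : (g d σ) = fun z : EuclideanSpace ℝ (Fin d) =>
      gconst d σ * rexp (-(1/(2*σ^2)) * ‖z‖^2) := by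
    funext w
    unfold g
    congr 2
    field_simp
  rw [hfun]
  refine h2.congr_fderiv ?_
  ext w
  have hg : g d σ z = gconst d σ * rexp (-(1/(2*σ^2)) * ‖z‖^2) := by rw [hfun]
  simp only [Dg, ContinuousLinearMap.coe_smul', Pi.smul_apply, smul_eq_mul,
    ContinuousLinearMap.smul_apply]
  rw [hg]
  have hσ2 : σ^2 ≠ 0 := by positivity
  field_simp
  ring

def gi (σ : ℝ) (i : Fin d) (z : EuclideanSpace ℝ (Fin d)) : ℝ :=
  (-(z i) / σ ^ 2) * g d σ z

def Di (σ : ℝ) (i : Fin d) (z : EuclideanSpace ℝ (Fin d)) :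
    EuclideanSpace ℝ (Fin d) →L[ℝ] ℝ :=
  (-(1/σ ^ 2)) • ((z i) • Dg σ z + (g d σ z) • (EuclideanSpace.proj i))

def hi (σ : ℝ) (i : Fin d) (z : EuclideanSpace ℝ (Fin d)) : ℝ :=
  ((z i)^2/σ^4 - 1/σ^2) * g d σ z

theorem continuous_coord (i : Fin d) :
    Continuous (fun z : EuclideanSpace ℝ (Fin d) => z i) :=
  (EuclideanSpace.proj (𝕜 := ℝ) i).continuous

theorem continuous_Di (i : Fin d) : Continuous (Di (d := d) σ i) := by
  have h1 := continuous_coord (d := d) i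
  have h2 := continuous_Dg (d := d) (σ := σ)
  have h3 := continuous_g (d := d) (σ := σ)
  unfold Di
  fun_prop

theorem hasFDerivAt_gi (hσ : 0 < σ) (i : Fin d) (z : EuclideanSpace ℝ (Fin d)) :
    HasFDerivAt (gi σ i) (Di σ i z) z := by
  have hp : HasFDerivAt (fun z : EuclideanSpace ℝ (Fin d) => z i)
      (EuclideanSpace.proj (𝕜 := ℝ) i) z :=
    ContinuousLinearMap.hasFDerivAt (EuclideanSpace.proj (𝕜 := ℝ) i)
  have h1 := (hp.mul (hasFDerivAt_g hσ z)).const_mul (-(1/σ^2))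
  have hfun : (gi σ i) = fun z : EuclideanSpace ℝ (Fin d) =>
      (-(1/σ^2)) * (z i * g d σ z) := by
    funext w; unfold gi; ring
  rw [hfun]
  exact h1

theorem inner_single (z : EuclideanSpace ℝ (Fin d)) (i : Fin d) :
    (innerSL ℝ z) (EuclideanSpace.single i (1:ℝ)) = z i := by
  simp [EuclideanSpace.inner_single_right]

theorem Dg_apply (i : Fin d) (z : EuclideanSpace ℝ (Fin d)) :
    Dg σ z (EuclideanSpace.single i (1:ℝ)) = gi σ i z := by
  unfold Dg gi
  rw [ContinuousLinearMap.smul_apply, inner_single]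
  simp only [smul_eq_mul]
  ring

theorem Di_apply (i : Fin d) (z : EuclideanSpace ℝ (Fin d)) :
    Di σ i z (EuclideanSpace.single i (1:ℝ)) = hi σ i z := by
  unfold Di hi
  rw [ContinuousLinearMap.smul_apply, ContinuousLinearMap.add_apply,
    ContinuousLinearMap.smul_apply, ContinuousLinearMap.smul_apply, Dg_apply]
  rw [show (EuclideanSpace.proj (𝕜 := ℝ) i) (EuclideanSpace.single i (1:ℝ)) = 1 by simp]
  simp only [smul_eq_mul, gi]
  ring

theorem norm_proj_le (i : Fin d) :
    ‖(EuclideanSpace.proj (𝕜 := ℝ) i : EuclideanSpace ℝ (Fin d) →L[ℝ] ℝ)‖ ≤ 1 := by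
  apply ContinuousLinearMap.opNorm_le_bound _ zero_le_one
  intro v
  rw [one_mul]
  simpa using abs_coord_le v i

theorem mul_exp_neg_le {b t : ℝ} (hb : 0 < b) (ht : 0 ≤ t) : t * rexp (-(b*t)) ≤ 1/b := by
  have h1 : b*t ≤ rexp (b*t) := by linarith [Real.add_one_le_exp (b*t)]
  have h2 : (b*t) * rexp (-(b*t)) ≤ rexp (b*t) * rexp (-(b*t)) :=
    mul_le_mul_of_nonneg_right h1 (Real.exp_pos _).le
  rw [← Real.exp_add] at h2
  simp only [add_neg_cancel, Real.exp_zero] at h2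
  rw [div_eq_mul_inv, one_mul]
  calc t * rexp (-(b*t)) = ((b*t) * rexp (-(b*t))) * b⁻¹ := by field_simp
    _ ≤ 1 * b⁻¹ := mul_le_mul_of_nonneg_right h2 (by positivity)
    _ = b⁻¹ := one_mul _

theorem exp_split (hσ : 0 < σ) (z : EuclideanSpace ℝ (Fin d)) :
    g d σ z = gconst d σ *
      (rexp (-((4*σ^2)⁻¹ * ‖z‖^2)) * rexp (-((4*σ^2)⁻¹ * ‖z‖^2))) := by
  unfold g
  rw [← Real.exp_add]
  congr 1
  have : σ^2 ≠ 0 := by positivity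
  field_simp
  ring

theorem exp_le_one' (hσ : 0 < σ) (z : EuclideanSpace ℝ (Fin d)) :
    rexp (-((4*σ^2)⁻¹ * ‖z‖^2)) ≤ 1 := by
  rw [Real.exp_le_one_iff]
  have : (0:ℝ) ≤ (4*σ^2)⁻¹ * ‖z‖^2 := by positivity
  linarith

theorem sq_exp_le (hσ : 0 < σ) (z : EuclideanSpace ℝ (Fin d)) :
    ‖z‖^2 * rexp (-((4*σ^2)⁻¹ * ‖z‖^2)) ≤ 4*σ^2 := by
  have := mul_exp_neg_le (b := (4*σ^2)⁻¹) (t := ‖z‖^2) (by positivity) (sq_nonneg _)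
  calc ‖z‖^2 * rexp (-((4*σ^2)⁻¹ * ‖z‖^2)) ≤ 1/(4*σ^2)⁻¹ := this
    _ = 4*σ^2 := by field_simp

theorem norm_exp_le (hσ : 0 < σ) (z : EuclideanSpace ℝ (Fin d)) :
    ‖z‖ * rexp (-((4*σ^2)⁻¹ * ‖z‖^2)) ≤ 1 + 4*σ^2 := by
  have h1 := sq_exp_le hσ z
  have h2 := exp_le_one' hσ z
  have h3 : ‖z‖ ≤ 1 + ‖z‖^2 := by nlinarith [norm_nonneg z]
  have h4 : (0:ℝ) < rexp (-((4*σ^2)⁻¹ * ‖z‖^2)) := Real.exp_pos _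
  nlinarith [norm_nonneg z]

theorem g_le (hσ : 0 < σ) (z : EuclideanSpace ℝ (Fin d)) :
    g d σ z ≤ gconst d σ * rexp (-((4*σ^2)⁻¹ * ‖z‖^2)) := by
  rw [exp_split hσ]
  have h2 := exp_le_one' hσ z
  have hc := gconst_pos (d := d) hσ
  have h4 : (0:ℝ) < rexp (-((4*σ^2)⁻¹ * ‖z‖^2)) := Real.exp_pos _
  nlinarith [mul_le_mul_of_nonneg_left h2 (mul_pos hc h4).le]

theorem norm_Dg_eq (hσ : 0 < σ) (z : EuclideanSpace ℝ (Fin d)) :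
    ‖Dg σ z‖ = g d σ z / σ^2 * ‖z‖ := by
  have hgz := g_pos hσ z
  have h := norm_smul (-(g d σ z) / σ ^ 2) (innerSL ℝ z)
  unfold Dg
  rw [h]
  rw [show ‖innerSL ℝ z‖ = ‖z‖ by simp]
  rw [Real.norm_eq_abs, abs_div, abs_neg, abs_of_pos hgz,
    abs_of_pos (show (0:ℝ) < σ^2 by positivity)]

theorem norm_Dg_le (hσ : 0 < σ) (z : EuclideanSpace ℝ (Fin d)) :
    ‖Dg σ z‖ ≤ (gconst d σ / σ^2 * (1 + 4*σ^2)) * rexp (-((4*σ^2)⁻¹ * ‖z‖^2)) := by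
  rw [norm_Dg_eq hσ z]
  have hσ2 : (0:ℝ) < σ^2 := by positivity
  have hc := gconst_pos (d := d) hσ
  have h4 : (0:ℝ) < rexp (-((4*σ^2)⁻¹ * ‖z‖^2)) := Real.exp_pos _
  calc g d σ z / σ^2 * ‖z‖
      = (‖z‖ * rexp (-((4*σ^2)⁻¹ * ‖z‖^2))) * (gconst d σ * rexp (-((4*σ^2)⁻¹ * ‖z‖^2))) / σ^2 := by
        rw [exp_split hσ]; ring
    _ ≤ (1 + 4*σ^2) * (gconst d σ * rexp (-((4*σ^2)⁻¹ * ‖z‖^2))) / σ^2 := by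
        have hne := norm_exp_le hσ z
        gcongr
    _ = (gconst d σ / σ^2 * (1 + 4*σ^2)) * rexp (-((4*σ^2)⁻¹ * ‖z‖^2)) := by ring

theorem abs_gi_le (hσ : 0 < σ) (i : Fin d) (z : EuclideanSpace ℝ (Fin d)) :
    |gi σ i z| ≤ (gconst d σ / σ^2 * (1 + 4*σ^2)) * rexp (-((4*σ^2)⁻¹ * ‖z‖^2)) := by
  have hgz := g_pos hσ z
  have hσ2 : (0:ℝ) < σ^2 := by positivity
  have h1 : |gi σ i z| ≤ g d σ z / σ^2 * ‖z‖ := by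
    unfold gi
    rw [abs_mul, abs_div, abs_neg, abs_of_pos hσ2, abs_of_pos hgz]
    calc |z i| / σ^2 * g d σ z ≤ ‖z‖ / σ^2 * g d σ z := by
          have h := abs_coord_le z i
          gcongr
      _ = g d σ z / σ^2 * ‖z‖ := by ring
  refine h1.trans ?_
  rw [← norm_Dg_eq hσ z]
  exact norm_Dg_le hσ z

theorem norm_Di_le (hσ : 0 < σ) (i : Fin d) (z : EuclideanSpace ℝ (Fin d)) :
    ‖Di σ i z‖ ≤ (5 * gconst d σ / σ^2) * rexp (-((4*σ^2)⁻¹ * ‖z‖^2)) := by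
  have hgz := g_pos hσ z
  have hσ2 : (0:ℝ) < σ^2 := by positivity
  have hc := gconst_pos (d := d) hσ
  have h4 : (0:ℝ) < rexp (-((4*σ^2)⁻¹ * ‖z‖^2)) := Real.exp_pos _
  have h1 : ‖Di σ i z‖ ≤ (1/σ^2) * (‖z‖ * ‖Dg σ z‖ + g d σ z) := by
    unfold Di
    have hs := norm_smul (-(1/σ ^ 2))
      ((z i) • Dg σ z + (g d σ z) • (EuclideanSpace.proj (𝕜 := ℝ) i))
    rw [hs]
    have htri := norm_add_le ((z i) • Dg σ z)
      ((g d σ z) • (EuclideanSpace.proj (𝕜 := ℝ) i))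
    have hs1 := norm_smul (z i) (Dg σ z)
    have hs2 := norm_smul (g d σ z) (EuclideanSpace.proj (𝕜 := ℝ) i)
    rw [hs1, hs2] at htri
    have hb1 : ‖z i‖ * ‖Dg σ z‖ ≤ ‖z‖ * ‖Dg σ z‖ :=
      mul_le_mul_of_nonneg_right (by simpa using abs_coord_le z i) (norm_nonneg _)
    have hb2 : ‖g d σ z‖ * ‖(EuclideanSpace.proj (𝕜 := ℝ) i :
        EuclideanSpace ℝ (Fin d) →L[ℝ] ℝ)‖ ≤ g d σ z := by
      rw [Real.norm_eq_abs, abs_of_pos hgz]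
      calc g d σ z * ‖(EuclideanSpace.proj (𝕜 := ℝ) i :
            EuclideanSpace ℝ (Fin d) →L[ℝ] ℝ)‖ ≤ g d σ z * 1 :=
            mul_le_mul_of_nonneg_left (norm_proj_le i) hgz.le
        _ = g d σ z := mul_one _
    have h0 : ‖(-(1/σ^2) : ℝ)‖ = 1/σ^2 := by
      rw [Real.norm_eq_abs, abs_neg, abs_of_pos (by positivity)]
    rw [h0]
    exact mul_le_mul_of_nonneg_left (htri.trans (by linarith)) (by positivity)
  refine h1.trans ?_
  rw [norm_Dg_eq hσ z]
  have key : ‖z‖ * (g d σ z / σ^2 * ‖z‖) + g d σ z ≤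
      5 * gconst d σ * rexp (-((4*σ^2)⁻¹ * ‖z‖^2)) := by
    have e1 : ‖z‖ * (g d σ z / σ^2 * ‖z‖) =
        (‖z‖^2 * rexp (-((4*σ^2)⁻¹ * ‖z‖^2)) / σ^2) *
          (gconst d σ * rexp (-((4*σ^2)⁻¹ * ‖z‖^2))) := by
      rw [exp_split hσ]; ring
    have e2 : ‖z‖^2 * rexp (-((4*σ^2)⁻¹ * ‖z‖^2)) / σ^2 ≤ 4 := by
      rw [div_le_iff₀ hσ2]
      calc ‖z‖^2 * rexp (-((4*σ^2)⁻¹ * ‖z‖^2)) ≤ 4*σ^2 := sq_exp_le hσ z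
        _ = 4 * σ^2 := by ring
    have e3 : ‖z‖ * (g d σ z / σ^2 * ‖z‖) ≤
        4 * (gconst d σ * rexp (-((4*σ^2)⁻¹ * ‖z‖^2))) := by
      rw [e1]
      exact mul_le_mul_of_nonneg_right e2 (by positivity)
    have e4 := g_le hσ z
    linarith
  calc (1/σ^2) * (‖z‖ * (g d σ z / σ^2 * ‖z‖) + g d σ z)
      ≤ (1/σ^2) * (5 * gconst d σ * rexp (-((4*σ^2)⁻¹ * ‖z‖^2))) :=
        mul_le_mul_of_nonneg_left key (by positivity)
    _ = (5 * gconst d σ / σ^2) * rexp (-((4*σ^2)⁻¹ * ‖z‖^2)) := by ring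

theorem integrable_conv_smulD {f : EuclideanSpace ℝ (Fin d) → ℝ} (hf : Measurable f)
    {C : ℝ} (hbd : ∀ x, |f x| ≤ C)
    {Dφ : EuclideanSpace ℝ (Fin d) → EuclideanSpace ℝ (Fin d) →L[ℝ] ℝ}
    (hDc : Continuous Dφ) {b K : ℝ} (hb : 0 < b)
    (hKD : ∀ z, ‖Dφ z‖ ≤ K * rexp (-b * ‖z‖^2))
    (x : EuclideanSpace ℝ (Fin d)) :
    Integrable (fun y => f y • Dφ (x - y)) := by
  have hC : 0 ≤ C := (abs_nonneg _).trans (hbd 0)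
  have hK : 0 ≤ K := by
    have h := (norm_nonneg (Dφ 0)).trans (hKD 0)
    simpa using h
  have meas : AEStronglyMeasurable (fun y => f y • Dφ (x - y)) volume :=
    (hf.aestronglyMeasurable).smul
      ((hDc.comp (continuous_const.sub continuous_id)).aestronglyMeasurable)
  have hint : Integrable (fun y : EuclideanSpace ℝ (Fin d) =>
      C * K * rexp (-b * ‖x - y‖^2)) :=
    ((integrable_rexp_gauss d b hb).comp_sub_left x).const_mul (C*K)
  apply hint.mono' meas
  filter_upwards with y
  have hns := norm_smul (f y) (Dφ (x - y))
  rw [hns, Real.norm_eq_abs]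
  calc |f y| * ‖Dφ (x - y)‖ ≤ C * (K * rexp (-b * ‖x - y‖^2)) :=
      mul_le_mul (hbd y) (hKD _) (norm_nonneg _) hC
    _ = C * K * rexp (-b * ‖x - y‖^2) := by ring

theorem hasFDerivAt_conv {f : EuclideanSpace ℝ (Fin d) → ℝ} (hf : Measurable f)
    {C : ℝ} (hbd : ∀ x, |f x| ≤ C)
    {φ : EuclideanSpace ℝ (Fin d) → ℝ}
    {Dφ : EuclideanSpace ℝ (Fin d) → EuclideanSpace ℝ (Fin d) →L[ℝ] ℝ}
    (hD : ∀ z, HasFDerivAt φ (Dφ z) z) (hDc : Continuous Dφ)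
    {b K : ℝ} (hb : 0 < b)
    (hKφ : ∀ z, |φ z| ≤ K * rexp (-b * ‖z‖^2))
    (hKD : ∀ z, ‖Dφ z‖ ≤ K * rexp (-b * ‖z‖^2))
    (x₀ : EuclideanSpace ℝ (Fin d)) :
    HasFDerivAt (fun x => ∫ y, f y * φ (x - y)) (∫ y, f y • Dφ (x₀ - y)) x₀ := by
  have hC : 0 ≤ C := (abs_nonneg _).trans (hbd 0)
  have hK : 0 ≤ K := by
    have h := (norm_nonneg (Dφ 0)).trans (hKD 0)
    simpa using h
  have hCK : 0 ≤ C * K := mul_nonneg hC hK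
  have hφc : Continuous φ := by
    rw [continuous_iff_continuousAt]; exact fun z => (hD z).continuousAt
  have meas : ∀ x : EuclideanSpace ℝ (Fin d),
      AEStronglyMeasurable (fun y => f y * φ (x - y)) volume := fun x =>
    (hf.aestronglyMeasurable).mul
      ((hφc.comp (continuous_const.sub continuous_id)).aestronglyMeasurable)
  refine hasFDerivAt_integral_of_dominated_of_fderiv_le
    (F := fun x y => f y * φ (x - y)) (F' := fun x y => f y • Dφ (x - y))
    (bound := fun y => C * K * rexp b * rexp (-(b/2) * ‖x₀ - y‖^2))
    (Metric.ball_mem_nhds x₀ one_pos) ?_ ?_ ?_ ?_ ?_ ?_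
  · filter_upwards with x using meas x
  · have hint : Integrable (fun y : EuclideanSpace ℝ (Fin d) =>
        C * K * rexp (-b * ‖x₀ - y‖^2)) :=
      ((integrable_rexp_gauss d b hb).comp_sub_left x₀).const_mul (C*K)
    apply hint.mono' (meas x₀)
    filter_upwards with y
    rw [Real.norm_eq_abs, abs_mul]
    calc |f y| * |φ (x₀ - y)| ≤ C * (K * rexp (-b * ‖x₀ - y‖^2)) :=
        mul_le_mul (hbd y) (hKφ _) (abs_nonneg _) hC
      _ = C * K * rexp (-b * ‖x₀ - y‖^2) := by ring
  · exact (integrable_conv_smulD hf hbd hDc hb hKD x₀).aestronglyMeasurable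
  · filter_upwards with y
    intro x hx
    have hxx : ‖x - x₀‖ < 1 := by
      rw [← dist_eq_norm]; exact Metric.mem_ball.mp hx
    have hns := norm_smul (f y) (Dφ (x - y))
    rw [hns, Real.norm_eq_abs]
    have h2 : ‖x₀ - y‖^2 ≤ 2 * ‖x - x₀‖^2 + 2 * ‖x - y‖^2 := by
      have h0 : x₀ - y = -(x - x₀) + (x - y) := by abel
      rw [h0]
      have h5 := norm_add_le (-(x - x₀)) (x - y)
      rw [norm_neg] at h5
      nlinarith [sq_nonneg (‖x - x₀‖ - ‖x - y‖), norm_nonneg (-(x - x₀) + (x - y)),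
        norm_nonneg (x - x₀), norm_nonneg (x - y)]
    have h7 : ‖x - x₀‖^2 ≤ 1 := by nlinarith [norm_nonneg (x - x₀)]
    have h3 : -b * ‖x - y‖^2 ≤ b + (-(b/2) * ‖x₀ - y‖^2) := by
      nlinarith [mul_le_mul_of_nonneg_left h2 (by positivity : (0:ℝ) ≤ b/2),
        mul_le_mul_of_nonneg_left h7 hb.le]
    have h6 : rexp (-b * ‖x - y‖^2) ≤ rexp b * rexp (-(b/2) * ‖x₀ - y‖^2) := by
      rw [← Real.exp_add]
      exact Real.exp_le_exp.mpr h3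
    calc |f y| * ‖Dφ (x - y)‖ ≤ C * (K * rexp (-b * ‖x - y‖^2)) :=
        mul_le_mul (hbd y) (hKD _) (norm_nonneg _) hC
      _ = C * K * rexp (-b * ‖x - y‖^2) := by ring
      _ ≤ C * K * (rexp b * rexp (-(b/2) * ‖x₀ - y‖^2)) :=
        mul_le_mul_of_nonneg_left h6 hCK
      _ = C * K * rexp b * rexp (-(b/2) * ‖x₀ - y‖^2) := by ring
  · exact ((integrable_rexp_gauss d (b/2) (half_pos hb)).comp_sub_left x₀).const_mul
      (C * K * rexp b)
  · filter_upwards with y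
    intro x hx
    have h0 : HasFDerivAt (fun x : EuclideanSpace ℝ (Fin d) => x - y)
        (ContinuousLinearMap.id ℝ _) x := (hasFDerivAt_id x).sub_const y
    have h1 := (hD (x - y)).comp x h0
    rw [ContinuousLinearMap.comp_id] at h1
    exact h1.const_mul (f y)

end SteinAux

end

theorem SteinAux.integral_gaussianMeasure {d : ℕ} {σ : ℝ} (hσ : 0 < σ)
    (h : EuclideanSpace ℝ (Fin d) → ℝ) :
    ∫ δ, h δ ∂(gaussianMeasure d σ) = ∫ δ, SteinAux.g d σ δ * h δ := by
  have hmeas : Measurable fun δ : EuclideanSpace ℝ (Fin d) =>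
      Real.toNNReal (SteinAux.g d σ δ) :=
    SteinAux.continuous_g.measurable.real_toNNReal
  have heq : gaussianMeasure d σ = volume.withDensity
      (fun δ => ((Real.toNNReal (SteinAux.g d σ δ) : NNReal) : ENNReal)) := rfl
  rw [heq, integral_withDensity_eq_integral_smul hmeas]
  congr 1
  funext δ
  rw [NNReal.smul_def, Real.coe_toNNReal _ (SteinAux.g_pos hσ δ).le, smul_eq_mul]

theorem stein_laplacian (d : ℕ) (hd : 0 < d) (σ : ℝ) (hσ : 0 < σ)
    (f : EuclideanSpace ℝ (Fin d) → ℝ) (hf : Measurable f)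
    (C : ℝ) (hbd : ∀ x, |f x| ≤ C)
    (u : EuclideanSpace ℝ (Fin d) → ℝ)
    (hu : ∀ x, u x = ∫ δ, f (x + δ) ∂(gaussianMeasure d σ)) :
    ∀ x, (∑ i : Fin d,
        fderiv ℝ (fun y => fderiv ℝ u y (EuclideanSpace.single i (1 : ℝ))) x
          (EuclideanSpace.single i (1 : ℝ))) =
      ∫ δ, ((‖δ‖ ^ 2 - σ ^ 2 * d) / σ ^ 4) * f (x + δ) ∂(gaussianMeasure d σ) := by
  intro x
  have hσ2 : (0:ℝ) < σ^2 := by positivity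
  set b : ℝ := (4*σ^2)⁻¹ with hbdef
  have hb : 0 < b := by positivity
  have hc := SteinAux.gconst_pos (d := d) hσ
  set K : ℝ := SteinAux.gconst d σ + SteinAux.gconst d σ / σ^2 * (1 + 4*σ^2) +
      5 * SteinAux.gconst d σ / σ^2 with hKdef
  have hK1 : (0:ℝ) ≤ SteinAux.gconst d σ / σ^2 * (1 + 4*σ^2) := by positivity
  have hK2 : (0:ℝ) ≤ 5 * SteinAux.gconst d σ / σ^2 := by positivity
  have hexp : ∀ z : EuclideanSpace ℝ (Fin d),
      rexp (-((4*σ^2)⁻¹ * ‖z‖^2)) = rexp (-b * ‖z‖^2) := by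
    intro z; rw [hbdef, neg_mul]
  have hepos : ∀ z : EuclideanSpace ℝ (Fin d), (0:ℝ) < rexp (-b * ‖z‖^2) :=
    fun z => Real.exp_pos _
  have hgK : ∀ z, |SteinAux.g d σ z| ≤ K * rexp (-b * ‖z‖^2) := by
    intro z
    rw [abs_of_pos (SteinAux.g_pos hσ z)]
    refine ((SteinAux.g_le hσ z).trans_eq (by rw [hexp])).trans ?_
    exact mul_le_mul_of_nonneg_right (by rw [hKdef]; linarith) (hepos z).le
  have hDgK : ∀ z, ‖SteinAux.Dg (d := d) σ z‖ ≤ K * rexp (-b * ‖z‖^2) := by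
    intro z
    refine ((SteinAux.norm_Dg_le hσ z).trans_eq (by rw [hexp])).trans ?_
    exact mul_le_mul_of_nonneg_right (by rw [hKdef]; linarith) (hepos z).le
  have hgiK : ∀ (i : Fin d) (z : EuclideanSpace ℝ (Fin d)),
      |SteinAux.gi σ i z| ≤ K * rexp (-b * ‖z‖^2) := by
    intro i z
    refine ((SteinAux.abs_gi_le hσ i z).trans_eq (by rw [hexp])).trans ?_
    exact mul_le_mul_of_nonneg_right (by rw [hKdef]; linarith) (hepos z).le
  have hDiK : ∀ (i : Fin d) (z : EuclideanSpace ℝ (Fin d)),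
      ‖SteinAux.Di σ i z‖ ≤ K * rexp (-b * ‖z‖^2) := by
    intro i z
    refine ((SteinAux.norm_Di_le hσ i z).trans_eq (by rw [hexp])).trans ?_
    exact mul_le_mul_of_nonneg_right (by rw [hKdef]; linarith) (hepos z).le
  -- u as a convolution
  have hu' : u = fun x' => ∫ y, f y * SteinAux.g d σ (x' - y) := by
    funext x'
    rw [hu x', SteinAux.integral_gaussianMeasure hσ]
    have e1 : (fun δ : EuclideanSpace ℝ (Fin d) => SteinAux.g d σ δ * f (x' + δ)) =
        fun δ => (fun y => SteinAux.g d σ (y - x') * f y) (x' + δ) := by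
      funext δ; simp
    rw [e1, integral_add_left_eq_self (fun y => SteinAux.g d σ (y - x') * f y) x']
    congr 1
    funext y
    rw [mul_comm]
    congr 1
    unfold SteinAux.g
    rw [norm_sub_rev]
  have hD1 : ∀ x', HasFDerivAt u (∫ y, f y • SteinAux.Dg σ (x' - y)) x' := by
    intro x'
    rw [hu']
    exact SteinAux.hasFDerivAt_conv hf hbd (SteinAux.hasFDerivAt_g hσ)
      SteinAux.continuous_Dg hb hgK hDgK x'
  have hw : ∀ i : Fin d,
      (fun x' => fderiv ℝ u x' (EuclideanSpace.single i (1:ℝ))) =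
      fun x' => ∫ y, f y * SteinAux.gi σ i (x' - y) := by
    intro i
    funext x'
    rw [(hD1 x').fderiv]
    rw [ContinuousLinearMap.integral_apply
      (SteinAux.integrable_conv_smulD hf hbd SteinAux.continuous_Dg hb hDgK x')]
    congr 1
    funext y
    rw [ContinuousLinearMap.smul_apply, SteinAux.Dg_apply, smul_eq_mul]
  have hD2 : ∀ (i : Fin d) x',
      HasFDerivAt (fun x' => ∫ y, f y * SteinAux.gi σ i (x' - y))
      (∫ y, f y • SteinAux.Di σ i (x' - y)) x' := fun i x' =>
    SteinAux.hasFDerivAt_conv hf hbd (SteinAux.hasFDerivAt_gi hσ i)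
      (SteinAux.continuous_Di i) hb (hgiK i) (hDiK i) x'
  have hsum : ∀ z : EuclideanSpace ℝ (Fin d),
      ∑ i, SteinAux.hi σ i z = ((‖z‖^2 - σ^2*(d:ℝ))/σ^4) * SteinAux.g d σ z := by
    intro z
    unfold SteinAux.hi
    rw [← Finset.sum_mul]
    congr 1
    rw [Finset.sum_sub_distrib, ← Finset.sum_div, ← SteinAux.norm_sq_eq]
    simp only [Finset.sum_const, Finset.card_univ, Fintype.card_fin, nsmul_eq_mul]
    have hσ4 : (σ:ℝ)^4 ≠ 0 := by positivity
    field_simp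
  calc (∑ i : Fin d,
        fderiv ℝ (fun y => fderiv ℝ u y (EuclideanSpace.single i (1 : ℝ))) x
          (EuclideanSpace.single i (1 : ℝ)))
      = ∑ i : Fin d, ∫ y, f y * SteinAux.hi σ i (x - y) := by
        apply Finset.sum_congr rfl
        intro i _
        rw [hw i, (hD2 i x).fderiv]
        rw [ContinuousLinearMap.integral_apply
          (SteinAux.integrable_conv_smulD hf hbd (SteinAux.continuous_Di i) hb (hDiK i) x)]
        congr 1
        funext y
        rw [ContinuousLinearMap.smul_apply, SteinAux.Di_apply, smul_eq_mul]
    _ = ∫ y, ∑ i : Fin d, f y * SteinAux.hi σ i (x - y) := by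
        rw [← integral_finset_sum]
        intro i _
        have hint := (SteinAux.integrable_conv_smulD hf hbd (SteinAux.continuous_Di i)
          hb (hDiK i) x).apply_continuousLinearMap (EuclideanSpace.single i (1:ℝ))
        apply hint.congr
        filter_upwards with y
        rw [ContinuousLinearMap.smul_apply, SteinAux.Di_apply, smul_eq_mul]
    _ = ∫ y, f y * (((‖x - y‖^2 - σ^2*(d:ℝ))/σ^4) * SteinAux.g d σ (x - y)) := by
        congr 1
        funext y
        rw [← Finset.mul_sum, hsum (x - y)]
    _ = ∫ δ, ((‖δ‖ ^ 2 - σ ^ 2 * d) / σ ^ 4) * f (x + δ) ∂(gaussianMeasure d σ) := by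
        rw [SteinAux.integral_gaussianMeasure hσ]
        rw [← integral_add_left_eq_self
          (fun y => f y * (((‖x - y‖^2 - σ^2*(d:ℝ))/σ^4) * SteinAux.g d σ (x - y))) x]
        congr 1
        funext δ
        have hxd : x - (x + δ) = -δ := by abel
        simp only [hxd, norm_neg]
        have hgneg : SteinAux.g d σ (-δ) = SteinAux.g d σ δ := by
          unfold SteinAux.g; rw [norm_neg]
        rw [hgneg]
        ring
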